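/- Let d be an odd positive integer, δ ∈ ℝ, and for k, l ∈ {-(d-1)/2, …, (d-1)/2} define M_{lk} = |⟨θ_l | θ_{k+δ}⟩|², where |θ_s⟩ has components d^{-1/2} e^{-2πisn/d}. Then M_{lk} = (1/d) ∑_{r=-(d-1)/2}^{(d-1)/2} e^{2πir(l-k)/d} e^{-2πiδr/d} (1 - (1 - e^{2πiδ·sign(r)}) |r|/d), and consequently M is a doubly stochastic matrix whose eigenvalues are λ_r = e^{-2πiδr/d}(1 - (1 - e^{2πiδ·sign(r)})|r|/d) with eigenvectors v_r = (d^{-1/2} e^{2πirk/d})_k. -/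

import Mathlib

open Complex

/-- Physical index: k ∈ Fin d represents the integer k - (d-1)/2. -/
def clockIdx (d : ℕ) (k : Fin d) : ℤ := (k : ℤ) - ((d : ℤ) - 1) / 2

/-- The "time state" vector |θ_s⟩ ∈ ℂ^d with components d^{-1/2} e^{-2πi s n/d},
    n ranging over {-(d-1)/2,…,(d-1)/2}. -/
noncomputable def clockVec (d : ℕ) (s : ℝ) : EuclideanSpace ℂ (Fin d) := WithLp.toLp 2 fun n =>
  (1 / Real.sqrt d : ℝ) * Complex.exp (-2 * Real.pi * Complex.I * s * (clockIdx d n : ℂ) / d)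

/-- The transition matrix M_{lk} = |⟨θ_l | θ_{k+δ}⟩|². -/
noncomputable def clockM (d : ℕ) (δ : ℝ) : Matrix (Fin d) (Fin d) ℂ :=
  Matrix.of fun l k =>
    ((‖(inner ℂ (clockVec d (clockIdx d l : ℝ)) (clockVec d ((clockIdx d k : ℝ) + δ)) : ℂ)‖) ^ 2 : ℝ)

/-- Eigenvalue λ_r = e^{-2πiδr/d}(1 - (1 - e^{2πiδ·sign r})|r|/d). -/
noncomputable def clockEigval (d : ℕ) (δ : ℝ) (r : ℤ) : ℂ :=
  Complex.exp (-2 * Real.pi * Complex.I * δ * r / d) *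
    (1 - (1 - Complex.exp (2 * Real.pi * Complex.I * δ * (r.sign : ℂ))) * ((|r| : ℤ) : ℂ) / d)

/-- Eigenvector v_r = (d^{-1/2} e^{2πirk/d})_k. -/
noncomputable def clockEigvec (d : ℕ) (r : ℤ) : Fin d → ℂ := fun k =>
  (1 / Real.sqrt d : ℝ) * Complex.exp (2 * Real.pi * Complex.I * r * (clockIdx d k : ℂ) / d)


section Helpers

lemma clockIdx_sub (d : ℕ) (n m : Fin d) : clockIdx d n - clockIdx d m = (n : ℤ) - (m : ℤ) := by
  simp [clockIdx]

lemma clockIdx_abs_lt (d : ℕ) (k : Fin d) : |clockIdx d k| < d := by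
  have := k.isLt
  simp only [clockIdx]
  rw [abs_lt]
  omega

lemma clockIdx_abs_le (d : ℕ) (hd : Odd d) (k : Fin d) : |clockIdx d k| ≤ ((d : ℤ) - 1) / 2 := by
  obtain ⟨c, hc⟩ := hd
  have := k.isLt
  simp only [clockIdx]
  rw [abs_le]
  omega

lemma clockIdx_inj (d : ℕ) {k l : Fin d} (h : clockIdx d k = clockIdx d l) : k = l := by
  simp only [clockIdx] at h
  exact Fin.ext (by omega)

lemma orth (d : ℕ) (hpos : 0 < d) (t : ℤ) (ht : t ≠ 0) (htd : |t| < d) :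
    ∑ k : Fin d, Complex.exp (2 * Real.pi * Complex.I * t * (clockIdx d k : ℂ) / d) = 0 := by
  have hd0 : (d : ℂ) ≠ 0 := Nat.cast_ne_zero.mpr hpos.ne'
  set ω : ℂ := Complex.exp (2 * Real.pi * Complex.I * t / d) with hω
  have hterm : ∀ k : Fin d, Complex.exp (2 * Real.pi * Complex.I * t * (clockIdx d k : ℂ) / d)
      = Complex.exp (2 * Real.pi * Complex.I * t * (-(((d:ℤ)-1)/2 : ℤ) : ℂ) / d) * ω ^ (k : ℕ) := by
    intro k
    rw [hω, ← Complex.exp_nat_mul, ← Complex.exp_add]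
    congr 1
    have : ((clockIdx d k : ℤ) : ℂ) = ((k : ℕ) : ℂ) + (-(((d:ℤ)-1)/2 : ℤ) : ℂ) := by
      push_cast [clockIdx]; ring
    rw [this]; field_simp; ring
  rw [Finset.sum_congr rfl (fun k _ => hterm k), ← Finset.mul_sum]
  have h2 : (2 * (Real.pi:ℂ) * Complex.I) ≠ 0 := by
    simp [Real.pi_ne_zero, Complex.I_ne_zero]
  have hω1 : ω ≠ 1 := by
    intro h
    rw [hω, Complex.exp_eq_one_iff] at h
    obtain ⟨n, hn⟩ := h
    have hn' : (2*(Real.pi:ℂ)*Complex.I) * t = (2*(Real.pi:ℂ)*Complex.I) * (n*d) := by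
      field_simp at hn; linear_combination (2*(Real.pi:ℂ)*Complex.I) * hn
    have : (t : ℂ) = n * d := mul_left_cancel₀ h2 hn'
    have ht' : t = n * d := by exact_mod_cast this
    have : (d:ℤ) ∣ t := ⟨n, by linarith [ht']⟩
    exact ht (Int.eq_zero_of_abs_lt_dvd this (by exact_mod_cast htd))
  have hωd : ω ^ d = 1 := by
    rw [hω, ← Complex.exp_nat_mul]
    have : (d : ℂ) * (2 * Real.pi * Complex.I * t / d) = t * (2 * Real.pi * Complex.I) := by
      field_simp
    rw [this, Complex.exp_int_mul_two_pi_mul_I]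
  rw [Fin.sum_univ_eq_sum_range (fun i => ω ^ i), geom_sum_eq hω1, hωd]
  simp

lemma countA (d : ℕ) (hpos : 0 < d) (E : ℤ → ℂ) :
    ∑ n : Fin d, ∑ m : Fin d, E ((n : ℤ) - (m : ℤ)) =
    ∑ r : Fin d, (((d - (r : ℕ) : ℕ) : ℂ) * E ((r : ℕ) : ℤ) + (((r : ℕ) : ℕ) : ℂ) * E (((r : ℕ) : ℤ) - d)) := by
  haveI : NeZero d := ⟨hpos.ne'⟩
  rw [Finset.sum_comm]
  have step1 : ∀ m : Fin d, ∑ n : Fin d, E ((n : ℤ) - (m : ℤ)) =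
      ∑ r : Fin d, (if (m : ℕ) + (r : ℕ) < d then E ((r : ℕ) : ℤ) else E (((r : ℕ) : ℤ) - d)) := by
    intro m
    rw [← Fintype.sum_equiv (Equiv.addLeft m) _ (fun n => E ((n : ℤ) - (m : ℤ))) (fun r => rfl)]
    apply Finset.sum_congr rfl
    intro r _
    simp only [Equiv.coe_addLeft]
    have hval : ((m + r : Fin d) : ℕ) = ((m : ℕ) + (r : ℕ)) % d := rfl
    by_cases h : (m : ℕ) + (r : ℕ) < d
    · rw [if_pos h]
      congr 1
      rw [hval, Nat.mod_eq_of_lt h]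
      push_cast
      ring
    · rw [if_neg h]
      congr 1
      have hlt : (m : ℕ) + (r : ℕ) - d < d := by have := m.isLt; have := r.isLt; omega
      have : ((m : ℕ) + (r : ℕ)) % d = (m : ℕ) + (r : ℕ) - d := by
        rw [Nat.mod_eq_sub_mod (by omega), Nat.mod_eq_of_lt hlt]
      rw [hval, this]
      have hge : d ≤ (m : ℕ) + (r : ℕ) := by omega
      push_cast [Nat.cast_sub hge]
      ring
  rw [Finset.sum_congr rfl (fun m _ => step1 m), Finset.sum_comm]
  apply Finset.sum_congr rfl
  intro r _
  set a := E ((r : ℕ) : ℤ)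
  set b := E (((r : ℕ) : ℤ) - d)
  have hr := r.isLt
  rw [Fin.sum_univ_eq_sum_range (fun m => if m + (r : ℕ) < d then a else b)]
  have hcong : ∀ m ∈ Finset.range d, (if m + (r : ℕ) < d then a else b) = (if m < d - (r : ℕ) then a else b) := by
    intro m _
    exact if_congr (by omega) rfl rfl
  rw [Finset.sum_congr rfl hcong, Finset.range_eq_Ico,
    ← Finset.sum_Ico_consecutive _ (Nat.zero_le (d - (r : ℕ))) (Nat.sub_le d (r : ℕ))]
  have h1 : ∑ m ∈ Finset.Ico 0 (d - (r : ℕ)), (if m < d - (r : ℕ) then a else b) = ((d - (r:ℕ) : ℕ) : ℂ) * a := by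
    rw [Finset.sum_congr rfl (fun m hm => if_pos (by simp at hm; omega))]
    simp [mul_comm]
  have h2 : ∑ m ∈ Finset.Ico (d - (r : ℕ)) d, (if m < d - (r : ℕ) then a else b) = ((r:ℕ) : ℂ) * b := by
    rw [Finset.sum_congr rfl (fun m hm => if_neg (by simp at hm; omega)), Finset.sum_const,
      Nat.card_Ico, show d - (d - (r:ℕ)) = (r:ℕ) by omega, nsmul_eq_mul]
  rw [h1, h2]

lemma countB (d : ℕ) (hd : Odd d) (hpos : 0 < d) (E : ℤ → ℂ) :
    ∑ r : Fin d, (((d - (r : ℕ) : ℕ) : ℂ) * E ((r : ℕ) : ℤ) + (((r : ℕ) : ℕ) : ℂ) * E (((r : ℕ) : ℤ) - d)) =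
    ∑ r : Fin d, ((((d : ℤ) - |clockIdx d r| : ℤ) : ℂ) * E (clockIdx d r)
      + ((|clockIdx d r| : ℤ) : ℂ) * E (clockIdx d r - d * (clockIdx d r).sign)) := by
  haveI : NeZero d := ⟨hpos.ne'⟩
  obtain ⟨c, hc⟩ := hd
  have hcd : c < d := by omega
  set cbar : Fin d := ⟨c, hcd⟩ with hcbar
  refine (Fintype.sum_equiv (Equiv.subRight cbar) _ _ ?_).symm
  intro x
  simp only [Equiv.subRight_apply]
  have hval : ((x - cbar : Fin d) : ℕ) = if c ≤ (x : ℕ) then (x : ℕ) - c else (x : ℕ) + c + 1 := by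
    rw [Fin.sub_def]
    simp only [hcbar]
    have hx := x.isLt
    by_cases h : c ≤ (x : ℕ)
    · rw [if_pos h]
      have : d - c + (x : ℕ) = d + ((x:ℕ) - c) := by omega
      rw [this, Nat.add_mod_left, Nat.mod_eq_of_lt (by omega)]
    · rw [if_neg h, Nat.mod_eq_of_lt (by omega)]
      omega
  have hidx : clockIdx d x = (x : ℤ) - c := by
    simp only [clockIdx]
    omega
  have hx := x.isLt
  by_cases h : c ≤ (x : ℕ)
  · rw [hval, if_pos h] at *
    by_cases h0 : (x : ℕ) = c
    · have hz : clockIdx d x = 0 := by rw [hidx]; omega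
      rw [hz]
      simp only [abs_zero, Int.sign_zero]
      have : ((x:ℕ) - c : ℕ) = 0 := by omega
      rw [this]
      push_cast
      simp
    · have hge : clockIdx d x = (((x:ℕ) - c : ℕ) : ℤ) := by rw [hidx]; omega
      have habs : |clockIdx d x| = clockIdx d x := abs_of_nonneg (by rw [hge]; positivity)
      have hsign : (clockIdx d x).sign = 1 := Int.sign_eq_one_of_pos (by rw [hge]; omega)
      rw [habs, hsign, hge]
      have h1 : ((d - ((x:ℕ) - c) : ℕ) : ℂ) = (((d:ℤ) - (((x:ℕ) - c : ℕ) : ℤ) : ℤ) : ℂ) := by push_cast [Nat.cast_sub (by omega : (x:ℕ) - c ≤ d)]; ring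
      rw [h1]
      norm_num
  · rw [hval, if_neg h] at *
    have hneg : clockIdx d x = (x : ℤ) - c := hidx
    have habs : |clockIdx d x| = c - (x : ℤ) := by rw [abs_of_neg (by omega)]; omega
    have hsign : (clockIdx d x).sign = -1 := Int.sign_eq_neg_one_of_neg (by omega)
    rw [habs, hsign, hneg]
    have e1 : (((x:ℕ) + c + 1 : ℕ) : ℤ) = (x:ℤ) + c + 1 := by push_cast; ring
    have e2 : ((d - ((x:ℕ) + c + 1) : ℕ) : ℂ) = (((c : ℤ) - (x:ℤ) : ℤ) : ℂ) := by
      have : d - ((x:ℕ) + c + 1) = c - (x:ℕ) := by omega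
      rw [this]
      push_cast [Nat.cast_sub (by omega : (x:ℕ) ≤ c)]
      ring
    rw [e2]
    have e3 : (((x:ℕ) + c + 1 : ℕ) : ℤ) = (d:ℤ) - (c - (x:ℤ)) := by push_cast; omega
    have e4 : ((((x:ℕ) + c + 1 : ℕ)) : ℂ) = (((d:ℤ) - (c - (x:ℤ)) : ℤ) : ℂ) := by exact_mod_cast congrArg (Int.cast : ℤ → ℂ) e3
    rw [e4]
    have a1 : (((x:ℕ) + c + 1 : ℕ) : ℤ) - d = (x:ℤ) - c := by push_cast; omega
    rw [a1]
    have a2 : (x:ℤ) - c - (d:ℤ) * (-1) = ((((x:ℕ) + c + 1 : ℕ)) : ℤ) := by push_cast; omega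
    rw [a2, e1]
    push_cast
    ring

lemma M_double (d : ℕ) (hpos : 0 < d) (δ : ℝ) (l k : Fin d) :
    clockM d δ l k = (1 / (d:ℂ)^2) * ∑ n : Fin d, ∑ m : Fin d,
      Complex.exp (-2 * Real.pi * Complex.I * ((clockIdx d k : ℝ) + δ - (clockIdx d l : ℝ) : ℝ)
        * (((n : ℤ) - (m : ℤ) : ℤ) : ℂ) / d) := by
  have hd0 : (d : ℂ) ≠ 0 := Nat.cast_ne_zero.mpr hpos.ne'
  have hs0 : (Real.sqrt d : ℂ) ≠ 0 := by
    rw [Complex.ofReal_ne_zero, Real.sqrt_ne_zero']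
    exact_mod_cast hpos
  set β : ℝ := (clockIdx d k : ℝ) + δ - (clockIdx d l : ℝ) with hβ
  set z : ℂ := (inner ℂ (clockVec d (clockIdx d l : ℝ)) (clockVec d ((clockIdx d k : ℝ) + δ)) : ℂ) with hz
  have habs : (clockM d δ l k : ℂ) = z * (starRingEnd ℂ) z := by
    show ((‖z‖ ^ 2 : ℝ) : ℂ) = z * (starRingEnd ℂ) z
    rw [Complex.sq_norm, Complex.mul_conj]
  have hzval : z = ∑ n : Fin d, (1 / (d:ℂ)) * Complex.exp (-2 * Real.pi * Complex.I * (β : ℂ) * (clockIdx d n : ℂ) / d) := by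
    rw [hz]
    rw [PiLp.inner_apply]
    apply Finset.sum_congr rfl
    intro n _
    simp only [clockVec, RCLike.inner_apply, map_mul]
    rw [← Complex.exp_conj]
    have hconj : (starRingEnd ℂ) (-2 * Real.pi * Complex.I * ((clockIdx d l : ℝ) : ℂ) * (clockIdx d n : ℂ) / d)
        = 2 * Real.pi * Complex.I * ((clockIdx d l : ℝ) : ℂ) * (clockIdx d n : ℂ) / d := by
      simp [map_mul, map_div₀, Complex.conj_I, Complex.conj_ofReal, map_intCast, map_natCast, map_neg, map_ofNat]
    rw [hconj, Complex.conj_ofReal]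
    rw [mul_mul_mul_comm, ← Complex.exp_add]
    congr 1
    · have hre : (1 / Real.sqrt d : ℝ) * (1 / Real.sqrt d : ℝ) = 1 / (d : ℝ) := by
        rw [div_mul_div_comm, one_mul, Real.mul_self_sqrt (Nat.cast_nonneg d)]
      calc ((1 / Real.sqrt d : ℝ) : ℂ) * ((1 / Real.sqrt d : ℝ) : ℂ)
          = (((1 / Real.sqrt d : ℝ) * (1 / Real.sqrt d : ℝ) : ℝ) : ℂ) := (Complex.ofReal_mul _ _).symm
        _ = ((1 / (d : ℝ) : ℝ) : ℂ) := by rw [hre]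
        _ = 1 / (d : ℂ) := by push_cast; ring
    · field_simp
      push_cast [hβ]
      ring
  have hzconj : (starRingEnd ℂ) z = ∑ m : Fin d, (1 / (d:ℂ)) * Complex.exp (2 * Real.pi * Complex.I * (β : ℂ) * (clockIdx d m : ℂ) / d) := by
    rw [hzval, map_sum]
    apply Finset.sum_congr rfl
    intro m _
    rw [map_mul, ← Complex.exp_conj]
    congr 1
    · simp [map_div₀]
    · congr 1
      simp [map_mul, map_div₀, Complex.conj_I, Complex.conj_ofReal, map_intCast, map_neg, map_ofNat]
  rw [habs, hzconj, hzval, Finset.sum_mul_sum]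
  rw [Finset.mul_sum]
  apply Finset.sum_congr rfl
  intro n _
  rw [Finset.mul_sum]
  apply Finset.sum_congr rfl
  intro m _
  rw [mul_mul_mul_comm, ← Complex.exp_add]
  have hc : ((((n : ℤ) - (m : ℤ) : ℤ)) : ℂ) = (clockIdx d n : ℂ) - (clockIdx d m : ℂ) := by
    rw [← clockIdx_sub d n m]; push_cast; ring
  rw [hc]
  congr 1
  · ring
  · congr 1
    field_simp
    ring

lemma part1 (d : ℕ) (hd : Odd d) (hpos : 0 < d) (δ : ℝ) (l k : Fin d) :
    clockM d δ l k =
      (1 / d) * ∑ r : Fin d,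
        Complex.exp (2 * Real.pi * Complex.I * (clockIdx d r : ℂ)
            * ((clockIdx d l : ℂ) - (clockIdx d k : ℂ)) / d) *
          Complex.exp (-2 * Real.pi * Complex.I * δ * (clockIdx d r : ℂ) / d) *
          (1 - (1 - Complex.exp (2 * Real.pi * Complex.I * δ * ((clockIdx d r).sign : ℂ)))
            * ((|clockIdx d r| : ℤ) : ℂ) / d) := by
  have hd0 : (d : ℂ) ≠ 0 := Nat.cast_ne_zero.mpr hpos.ne'
  set E : ℤ → ℂ := fun t => Complex.exp (-2 * Real.pi * Complex.I * ((clockIdx d k : ℝ) + δ - (clockIdx d l : ℝ) : ℝ)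
        * (t : ℂ) / d) with hE
  have key : (∑ n : Fin d, ∑ m : Fin d, E ((n : ℤ) - (m : ℤ)))
      = ∑ r : Fin d, ((((d : ℤ) - |clockIdx d r| : ℤ) : ℂ) * E (clockIdx d r)
        + ((|clockIdx d r| : ℤ) : ℂ) * E (clockIdx d r - d * (clockIdx d r).sign)) :=
    (countA d hpos E).trans (countB d hd hpos E)
  have hM : clockM d δ l k = (1 / (d:ℂ)^2) * ∑ n : Fin d, ∑ m : Fin d, E ((n : ℤ) - (m : ℤ)) :=
    M_double d hpos δ l k
  rw [hM, key]
  have point : ∀ r : Fin d, ((((d : ℤ) - |clockIdx d r| : ℤ) : ℂ) * E (clockIdx d r)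
        + ((|clockIdx d r| : ℤ) : ℂ) * E (clockIdx d r - d * (clockIdx d r).sign))
      = (d : ℂ) * (Complex.exp (2 * Real.pi * Complex.I * (clockIdx d r : ℂ)
            * ((clockIdx d l : ℂ) - (clockIdx d k : ℂ)) / d) *
          Complex.exp (-2 * Real.pi * Complex.I * δ * (clockIdx d r : ℂ) / d) *
          (1 - (1 - Complex.exp (2 * Real.pi * Complex.I * δ * ((clockIdx d r).sign : ℂ)))
            * ((|clockIdx d r| : ℤ) : ℂ) / d)) := by
    intro r
    set ρ : ℤ := clockIdx d r with hρ
    have key1 : Complex.exp (2 * Real.pi * Complex.I * (ρ : ℂ)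
            * ((clockIdx d l : ℂ) - (clockIdx d k : ℂ)) / d) *
          Complex.exp (-2 * Real.pi * Complex.I * δ * (ρ : ℂ) / d) = E ρ := by
      rw [hE, ← Complex.exp_add]
      congr 1
      push_cast
      field_simp
      ring
    have key2 : E (ρ - d * ρ.sign) = Complex.exp (2 * Real.pi * Complex.I * δ * ((ρ.sign : ℤ) : ℂ)) * E ρ := by
      rw [hE]
      beta_reduce
      have harg : (-2 * Real.pi * Complex.I * ((clockIdx d k : ℝ) + δ - (clockIdx d l : ℝ) : ℝ)
          * ((ρ - d * ρ.sign : ℤ) : ℂ) / d)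
          = (((clockIdx d k - clockIdx d l) * ρ.sign : ℤ) : ℂ) * (2 * Real.pi * Complex.I)
            + (2 * Real.pi * Complex.I * δ * ((ρ.sign : ℤ) : ℂ)
              + (-2 * Real.pi * Complex.I * ((clockIdx d k : ℝ) + δ - (clockIdx d l : ℝ) : ℝ) * (ρ : ℂ) / d)) := by
        push_cast
        field_simp
        ring
      rw [harg, Complex.exp_add, Complex.exp_int_mul_two_pi_mul_I, one_mul, Complex.exp_add]
    rw [key2, ← key1]
    push_cast
    field_simp
    ring
  rw [Finset.sum_congr rfl (fun r _ => point r), ← Finset.mul_sum]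
  rw [← mul_assoc]
  congr 1
  field_simp

lemma part2 (d : ℕ) (hd : Odd d) (hpos : 0 < d) (δ : ℝ) (k : Fin d) :
    ∑ l : Fin d, clockM d δ l k = 1 := by
  have hd0 : (d : ℂ) ≠ 0 := Nat.cast_ne_zero.mpr hpos.ne'
  rw [Finset.sum_congr rfl (fun l _ => part1 d hd hpos δ l k), ← Finset.mul_sum, Finset.sum_comm]
  obtain ⟨c, hc⟩ := hd
  have hcd : c < d := by omega
  set cbar : Fin d := ⟨c, hcd⟩ with hcbar
  have hc0 : clockIdx d cbar = 0 := by
    simp only [clockIdx, hcbar]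
    omega
  rw [Finset.sum_eq_single_of_mem cbar (Finset.mem_univ _) ?h0]
  case h0 =>
    intro r _ hr
    have hρ : clockIdx d r ≠ 0 := fun h => hr (clockIdx_inj d (h.trans hc0.symm))
    have hsplit : ∀ l : Fin d,
        Complex.exp (2 * Real.pi * Complex.I * (clockIdx d r : ℂ)
            * ((clockIdx d l : ℂ) - (clockIdx d k : ℂ)) / d) *
          Complex.exp (-2 * Real.pi * Complex.I * δ * (clockIdx d r : ℂ) / d) *
          (1 - (1 - Complex.exp (2 * Real.pi * Complex.I * δ * ((clockIdx d r).sign : ℂ)))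
            * ((|clockIdx d r| : ℤ) : ℂ) / d)
        = Complex.exp (2 * Real.pi * Complex.I * (clockIdx d r : ℂ) * (clockIdx d l : ℂ) / d)
          * (Complex.exp (2 * Real.pi * Complex.I * (clockIdx d r : ℂ) * (-(clockIdx d k : ℂ)) / d) *
            Complex.exp (-2 * Real.pi * Complex.I * δ * (clockIdx d r : ℂ) / d) *
            (1 - (1 - Complex.exp (2 * Real.pi * Complex.I * δ * ((clockIdx d r).sign : ℂ)))
              * ((|clockIdx d r| : ℤ) : ℂ) / d)) := by
      intro l
      rw [← mul_assoc, ← mul_assoc]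
      congr 2
      rw [← Complex.exp_add]
      congr 1
      field_simp
      ring
    rw [Finset.sum_congr rfl (fun l _ => hsplit l), ← Finset.sum_mul,
      orth d hpos (clockIdx d r) hρ (clockIdx_abs_lt d r), zero_mul]
  · have hone : ∀ l : Fin d,
        Complex.exp (2 * Real.pi * Complex.I * (clockIdx d cbar : ℂ)
            * ((clockIdx d l : ℂ) - (clockIdx d k : ℂ)) / d) *
          Complex.exp (-2 * Real.pi * Complex.I * δ * (clockIdx d cbar : ℂ) / d) *
          (1 - (1 - Complex.exp (2 * Real.pi * Complex.I * δ * ((clockIdx d cbar).sign : ℂ)))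
            * ((|clockIdx d cbar| : ℤ) : ℂ) / d) = 1 := by
      intro l
      rw [hc0]
      simp
    rw [Finset.sum_congr rfl (fun l _ => hone l), Finset.sum_const, Finset.card_univ,
      Fintype.card_fin, nsmul_eq_mul, mul_one]
    field_simp

lemma part3 (d : ℕ) (hd : Odd d) (hpos : 0 < d) (δ : ℝ) (l : Fin d) :
    ∑ k : Fin d, clockM d δ l k = 1 := by
  have hd0 : (d : ℂ) ≠ 0 := Nat.cast_ne_zero.mpr hpos.ne'
  rw [Finset.sum_congr rfl (fun k _ => part1 d hd hpos δ l k), ← Finset.mul_sum, Finset.sum_comm]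
  obtain ⟨c, hc⟩ := hd
  have hcd : c < d := by omega
  set cbar : Fin d := ⟨c, hcd⟩ with hcbar
  have hc0 : clockIdx d cbar = 0 := by
    simp only [clockIdx, hcbar]
    omega
  rw [Finset.sum_eq_single_of_mem cbar (Finset.mem_univ _) ?h0]
  case h0 =>
    intro r _ hr
    have hρ : clockIdx d r ≠ 0 := fun h => hr (clockIdx_inj d (h.trans hc0.symm))
    have hρ' : -(clockIdx d r) ≠ 0 := neg_ne_zero.mpr hρ
    have habs : |(-(clockIdx d r))| < d := by rw [abs_neg]; exact clockIdx_abs_lt d r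
    have hsplit : ∀ k : Fin d,
        Complex.exp (2 * Real.pi * Complex.I * (clockIdx d r : ℂ)
            * ((clockIdx d l : ℂ) - (clockIdx d k : ℂ)) / d) *
          Complex.exp (-2 * Real.pi * Complex.I * δ * (clockIdx d r : ℂ) / d) *
          (1 - (1 - Complex.exp (2 * Real.pi * Complex.I * δ * ((clockIdx d r).sign : ℂ)))
            * ((|clockIdx d r| : ℤ) : ℂ) / d)
        = Complex.exp (2 * Real.pi * Complex.I * ((-(clockIdx d r) : ℤ) : ℂ) * (clockIdx d k : ℂ) / d)
          * (Complex.exp (2 * Real.pi * Complex.I * (clockIdx d r : ℂ) * (clockIdx d l : ℂ) / d) *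
            Complex.exp (-2 * Real.pi * Complex.I * δ * (clockIdx d r : ℂ) / d) *
            (1 - (1 - Complex.exp (2 * Real.pi * Complex.I * δ * ((clockIdx d r).sign : ℂ)))
              * ((|clockIdx d r| : ℤ) : ℂ) / d)) := by
      intro k
      rw [← mul_assoc, ← mul_assoc]
      congr 2
      rw [← Complex.exp_add]
      congr 1
      push_cast
      field_simp
      ring
    rw [Finset.sum_congr rfl (fun k _ => hsplit k), ← Finset.sum_mul,
      orth d hpos (-(clockIdx d r)) hρ' habs, zero_mul]
  · have hone : ∀ k : Fin d,
        Complex.exp (2 * Real.pi * Complex.I * (clockIdx d cbar : ℂ)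
            * ((clockIdx d l : ℂ) - (clockIdx d k : ℂ)) / d) *
          Complex.exp (-2 * Real.pi * Complex.I * δ * (clockIdx d cbar : ℂ) / d) *
          (1 - (1 - Complex.exp (2 * Real.pi * Complex.I * δ * ((clockIdx d cbar).sign : ℂ)))
            * ((|clockIdx d cbar| : ℤ) : ℂ) / d) = 1 := by
      intro k
      rw [hc0]
      simp
    rw [Finset.sum_congr rfl (fun k _ => hone k), Finset.sum_const, Finset.card_univ,
      Fintype.card_fin, nsmul_eq_mul, mul_one]
    field_simp

lemma part4 (d : ℕ) (hd : Odd d) (hpos : 0 < d) (δ : ℝ) (r0 : Fin d) :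
    (clockM d δ).mulVec (clockEigvec d (clockIdx d r0))
      = clockEigval d δ (clockIdx d r0) • clockEigvec d (clockIdx d r0) := by
  have hd0 : (d : ℂ) ≠ 0 := Nat.cast_ne_zero.mpr hpos.ne'
  set s : ℤ := clockIdx d r0 with hs
  funext l
  simp only [Matrix.mulVec, dotProduct, Pi.smul_apply, smul_eq_mul, clockEigvec, clockEigval]
  rw [Finset.sum_congr rfl (fun k _ => by rw [part1 d hd hpos δ l k])]
  have hstep : ∀ k : Fin d,
      ((1 : ℂ) / d * ∑ r : Fin d,
        Complex.exp (2 * Real.pi * Complex.I * (clockIdx d r : ℂ)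
            * ((clockIdx d l : ℂ) - (clockIdx d k : ℂ)) / d) *
          Complex.exp (-2 * Real.pi * Complex.I * δ * (clockIdx d r : ℂ) / d) *
          (1 - (1 - Complex.exp (2 * Real.pi * Complex.I * δ * ((clockIdx d r).sign : ℂ)))
            * ((|clockIdx d r| : ℤ) : ℂ) / d))
        * (((1 / Real.sqrt d : ℝ) : ℂ) * Complex.exp (2 * Real.pi * Complex.I * (s : ℂ) * (clockIdx d k : ℂ) / d))
      = (1 : ℂ) / d * ∑ r : Fin d,
          (Complex.exp (2 * Real.pi * Complex.I * (clockIdx d r : ℂ)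
              * ((clockIdx d l : ℂ) - (clockIdx d k : ℂ)) / d) *
            Complex.exp (-2 * Real.pi * Complex.I * δ * (clockIdx d r : ℂ) / d) *
            (1 - (1 - Complex.exp (2 * Real.pi * Complex.I * δ * ((clockIdx d r).sign : ℂ)))
              * ((|clockIdx d r| : ℤ) : ℂ) / d)
            * (((1 / Real.sqrt d : ℝ) : ℂ) * Complex.exp (2 * Real.pi * Complex.I * (s : ℂ) * (clockIdx d k : ℂ) / d))) := by
    intro k
    rw [mul_assoc, Finset.sum_mul]
  rw [Finset.sum_congr rfl (fun k _ => hstep k), ← Finset.mul_sum, Finset.sum_comm]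
  rw [Finset.sum_eq_single_of_mem r0 (Finset.mem_univ _) ?h0]
  case h0 =>
    intro r _ hr
    have hρ : s - clockIdx d r ≠ 0 := by
      intro h
      exact hr (clockIdx_inj d (by omega))
    have habs : |s - clockIdx d r| < d := by
      have h1 := abs_le.mp (clockIdx_abs_le d hd r0)
      have h2 := abs_le.mp (clockIdx_abs_le d hd r)
      rw [abs_lt]
      rw [hs] at *
      omega
    have hsplit : ∀ k : Fin d,
        Complex.exp (2 * Real.pi * Complex.I * (clockIdx d r : ℂ)
            * ((clockIdx d l : ℂ) - (clockIdx d k : ℂ)) / d) *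
          Complex.exp (-2 * Real.pi * Complex.I * δ * (clockIdx d r : ℂ) / d) *
          (1 - (1 - Complex.exp (2 * Real.pi * Complex.I * δ * ((clockIdx d r).sign : ℂ)))
            * ((|clockIdx d r| : ℤ) : ℂ) / d)
          * (((1 / Real.sqrt d : ℝ) : ℂ) * Complex.exp (2 * Real.pi * Complex.I * (s : ℂ) * (clockIdx d k : ℂ) / d))
        = Complex.exp (2 * Real.pi * Complex.I * ((s - clockIdx d r : ℤ) : ℂ) * (clockIdx d k : ℂ) / d)
          * (Complex.exp (2 * Real.pi * Complex.I * (clockIdx d r : ℂ) * (clockIdx d l : ℂ) / d) *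
            Complex.exp (-2 * Real.pi * Complex.I * δ * (clockIdx d r : ℂ) / d) *
            (1 - (1 - Complex.exp (2 * Real.pi * Complex.I * δ * ((clockIdx d r).sign : ℂ)))
              * ((|clockIdx d r| : ℤ) : ℂ) / d)
            * ((1 / Real.sqrt d : ℝ) : ℂ)) := by
      intro k
      have hee : Complex.exp (2 * Real.pi * Complex.I * (clockIdx d r : ℂ)
            * ((clockIdx d l : ℂ) - (clockIdx d k : ℂ)) / d)
          * Complex.exp (2 * Real.pi * Complex.I * (s : ℂ) * (clockIdx d k : ℂ) / d)
          = Complex.exp (2 * Real.pi * Complex.I * ((s - clockIdx d r : ℤ) : ℂ) * (clockIdx d k : ℂ) / d)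
            * Complex.exp (2 * Real.pi * Complex.I * (clockIdx d r : ℂ) * (clockIdx d l : ℂ) / d) := by
        rw [← Complex.exp_add, ← Complex.exp_add]
        congr 1
        push_cast
        field_simp
        ring
      calc _ = (Complex.exp (2 * Real.pi * Complex.I * (clockIdx d r : ℂ)
            * ((clockIdx d l : ℂ) - (clockIdx d k : ℂ)) / d)
          * Complex.exp (2 * Real.pi * Complex.I * (s : ℂ) * (clockIdx d k : ℂ) / d))
          * (Complex.exp (-2 * Real.pi * Complex.I * δ * (clockIdx d r : ℂ) / d) *
            (1 - (1 - Complex.exp (2 * Real.pi * Complex.I * δ * ((clockIdx d r).sign : ℂ)))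
              * ((|clockIdx d r| : ℤ) : ℂ) / d)
            * ((1 / Real.sqrt d : ℝ) : ℂ)) := by ring
        _ = _ := by rw [hee]; ring
    rw [Finset.sum_congr rfl (fun k _ => hsplit k), ← Finset.sum_mul,
      orth d hpos (s - clockIdx d r) hρ habs, zero_mul]
  · have hone : ∀ k : Fin d,
        Complex.exp (2 * Real.pi * Complex.I * (clockIdx d r0 : ℂ)
            * ((clockIdx d l : ℂ) - (clockIdx d k : ℂ)) / d) *
          Complex.exp (-2 * Real.pi * Complex.I * δ * (clockIdx d r0 : ℂ) / d) *
          (1 - (1 - Complex.exp (2 * Real.pi * Complex.I * δ * ((clockIdx d r0).sign : ℂ)))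
            * ((|clockIdx d r0| : ℤ) : ℂ) / d)
          * (((1 / Real.sqrt d : ℝ) : ℂ) * Complex.exp (2 * Real.pi * Complex.I * (s : ℂ) * (clockIdx d k : ℂ) / d))
        = Complex.exp (2 * Real.pi * Complex.I * (s : ℂ) * (clockIdx d l : ℂ) / d)
          * (Complex.exp (-2 * Real.pi * Complex.I * δ * (s : ℂ) / d) *
            (1 - (1 - Complex.exp (2 * Real.pi * Complex.I * δ * ((s).sign : ℂ)))
              * ((|s| : ℤ) : ℂ) / d)
            * ((1 / Real.sqrt d : ℝ) : ℂ)) := by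
      intro k
      have hee : Complex.exp (2 * Real.pi * Complex.I * (clockIdx d r0 : ℂ)
            * ((clockIdx d l : ℂ) - (clockIdx d k : ℂ)) / d)
          * Complex.exp (2 * Real.pi * Complex.I * (s : ℂ) * (clockIdx d k : ℂ) / d)
          = Complex.exp (2 * Real.pi * Complex.I * (s : ℂ) * (clockIdx d l : ℂ) / d) := by
        rw [← Complex.exp_add]
        congr 1
        rw [hs]
        field_simp
        ring
      calc _ = (Complex.exp (2 * Real.pi * Complex.I * (clockIdx d r0 : ℂ)
            * ((clockIdx d l : ℂ) - (clockIdx d k : ℂ)) / d)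
          * Complex.exp (2 * Real.pi * Complex.I * (s : ℂ) * (clockIdx d k : ℂ) / d))
          * (Complex.exp (-2 * Real.pi * Complex.I * δ * (clockIdx d r0 : ℂ) / d) *
            (1 - (1 - Complex.exp (2 * Real.pi * Complex.I * δ * ((clockIdx d r0).sign : ℂ)))
              * ((|clockIdx d r0| : ℤ) : ℂ) / d)
            * ((1 / Real.sqrt d : ℝ) : ℂ)) := by rw [hs]; ring
        _ = _ := by rw [hee, hs]
    rw [Finset.sum_congr rfl (fun k _ => hone k), Finset.sum_const, Finset.card_univ,
      Fintype.card_fin, nsmul_eq_mul]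
    field_simp

theorem stmt_12 (d : ℕ) (hd : Odd d) (hpos : 0 < d) (δ : ℝ) :
    (∀ l k : Fin d, clockM d δ l k =
        (1 / d) * ∑ r : Fin d,
          Complex.exp (2 * Real.pi * Complex.I * (clockIdx d r : ℂ)
              * ((clockIdx d l : ℂ) - (clockIdx d k : ℂ)) / d) *
            Complex.exp (-2 * Real.pi * Complex.I * δ * (clockIdx d r : ℂ) / d) *
            (1 - (1 - Complex.exp (2 * Real.pi * Complex.I * δ * ((clockIdx d r).sign : ℂ)))
              * ((|clockIdx d r| : ℤ) : ℂ) / d)) ∧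
    (∀ k : Fin d, ∑ l : Fin d, clockM d δ l k = 1) ∧
    (∀ l : Fin d, ∑ k : Fin d, clockM d δ l k = 1) ∧
    (∀ r : Fin d, (clockM d δ).mulVec (clockEigvec d (clockIdx d r))
        = clockEigval d δ (clockIdx d r) • clockEigvec d (clockIdx d r)) := by
  exact ⟨fun l k => part1 d hd hpos δ l k, fun k => part2 d hd hpos δ k,
    fun l => part3 d hd hpos δ l, fun r => part4 d hd hpos δ r⟩
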